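/- arXiv:2405.14123 — 2 statements merged into one kernel-verified Lean document; each statement's English description precedes it below -/
import Mathlib

section
/- A matrix c = (c_{jk}) ∈ ℂ^{ℤ_d×ℤ_d} satisfies Tc = vv* for some unit vector v ∈ ℂ^d with |⟨S^jΩ^k v, v⟩|² = 1/(d+1) for all (j,k) ≠ (0,0) (i.e., v is a Weyl–Heisenberg SIC fiducial with fiducial projector Tc) if and only if (i) c_{jk} = ω^{-jk}·conj(c_{-j,-k}) for all j,k, (ii) c_{00} = 1, (iii) |c_{jk}|² = 1/(d+1) for all (j,k) ≠ (0,0), and (iv) trace((Tc)⁴) = 1. -/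
open Matrix Complex

/-- `ω = exp(2πi/d)`, a primitive `d`-th root of unity. -/
noncomputable def omegaRoot (d : ℕ) : ℂ := Complex.exp (2 * Real.pi * Complex.I / d)

/-- The cyclic shift matrix `S`, `S_{jk} = δ_{j,k+1}`. -/
def Smat (d : ℕ) [NeZero d] : Matrix (ZMod d) (ZMod d) ℂ :=
  Matrix.of fun j k => if j = k + 1 then 1 else 0

/-- The modulation matrix `Ω`, `Ω_{jk} = ω^j δ_{jk}`. -/
noncomputable def Omat (d : ℕ) [NeZero d] : Matrix (ZMod d) (ZMod d) ℂ :=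
  Matrix.of fun j k => if j = k then omegaRoot d ^ j.val else 0

/-- The reconstruction operator `T`, `Tc = (1/d) Σ_{j,k} c_{jk} (S^j Ω^k)^*`. -/
noncomputable def Trec (d : ℕ) [NeZero d] (c : Matrix (ZMod d) (ZMod d) ℂ) :
    Matrix (ZMod d) (ZMod d) ℂ :=
  (1 / (d : ℂ)) • ∑ j : ZMod d, ∑ k : ZMod d, c j k • (Smat d ^ j.val * Omat d ^ k.val)ᴴ

/-- The overlap `⟨S^j Ω^k v, v⟩ = Σ_r (S^j Ω^k v)_r conj(v_r)`. -/
noncomputable def overlap (d : ℕ) [NeZero d] (v : ZMod d → ℂ) (j k : ZMod d) : ℂ :=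
  ∑ r : ZMod d, ((Smat d ^ j.val * Omat d ^ k.val) *ᵥ v) r * (starRingEnd ℂ) (v r)

section Aux

variable {d : ℕ} [NeZero d]

lemma omega_prim : IsPrimitiveRoot (omegaRoot d) d :=
  Complex.isPrimitiveRoot_exp d (NeZero.ne d)

lemma omega_ne_zero : omegaRoot d ≠ 0 := Complex.exp_ne_zero _

lemma omega_zpow_congr {a b : ℤ} (h : (a : ZMod d) = (b : ZMod d)) :
    omegaRoot d ^ a = omegaRoot d ^ b := by
  have hdvd : (d : ℤ) ∣ a - b := by
    rwa [← ZMod.intCast_zmod_eq_zero_iff_dvd, Int.cast_sub, sub_eq_zero]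
  obtain ⟨m, hm⟩ := hdvd
  have : a = b + d * m := by omega
  rw [this, zpow_add₀ omega_ne_zero, _root_.zpow_mul, zpow_natCast,
    omega_prim.pow_eq_one, _root_.one_zpow, mul_one]

lemma omega_conj (z : ℤ) :
    (starRingEnd ℂ) (omegaRoot d ^ z) = omegaRoot d ^ (-z) := by
  have h1 : (starRingEnd ℂ) (omegaRoot d) = (omegaRoot d)⁻¹ := by
    rw [← Complex.inv_eq_conj]
    simpa using omega_prim.norm'_eq_one (NeZero.ne d)
  rw [map_zpow₀, h1, _root_.inv_zpow, ← _root_.zpow_neg]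

lemma Spow_apply (n : ℕ) (j k : ZMod d) :
    (Smat d ^ n) j k = if j = k + n then 1 else 0 := by
  induction n generalizing j k with
  | zero => simp [Matrix.one_apply, eq_comm]
  | succ n ih =>
    rw [pow_succ, Matrix.mul_apply]
    simp only [ih]
    simp only [Smat, Matrix.of_apply, mul_ite, mul_one, mul_zero]
    rw [Finset.sum_ite_eq' Finset.univ (k + 1)
      (fun x => if j = x + (n : ZMod d) then (1:ℂ) else 0)]
    have h2 : k + 1 + (n : ZMod d) = k + ((n : ZMod d) + 1) := by ring
    simp only [Finset.mem_univ, if_true, h2]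
    push_cast
    ring_nf

lemma Omat_eq_diagonal : Omat d = Matrix.diagonal fun j : ZMod d => omegaRoot d ^ j.val := by
  ext j k
  simp [Omat, Matrix.diagonal_apply]

lemma Opow_apply (n : ℕ) (j k : ZMod d) :
    (Omat d ^ n) j k = if j = k then omegaRoot d ^ (j.val * n) else 0 := by
  rw [Omat_eq_diagonal, Matrix.diagonal_pow]
  simp [Matrix.diagonal_apply, pow_mul]

lemma natCast_val' (j : ZMod d) : ((j.val : ℕ) : ZMod d) = j := by
  simp [ZMod.natCast_val, ZMod.cast_id]

lemma Dmat_apply (j k r s : ZMod d) :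
    (Smat d ^ j.val * Omat d ^ k.val) r s
      = if r = s + j then omegaRoot d ^ (s.val * k.val) else 0 := by
  rw [Matrix.mul_apply]
  rw [Finset.sum_eq_single s]
  · rw [Spow_apply, Opow_apply, natCast_val']
    by_cases h : r = s + j <;> simp [h]
  · intro b _ hb
    rw [Opow_apply]
    simp [hb]
  · simp

lemma omega_conj' (z : ℤ) :
    star (omegaRoot d ^ z) = omegaRoot d ^ (-z) := by
  rw [← starRingEnd_apply, omega_conj]

lemma Dmat_neg_conjTranspose (j k : ZMod d) :
    (Smat d ^ (-j).val * Omat d ^ (-k).val)ᴴ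
      = omegaRoot d ^ (j.val * k.val) • (Smat d ^ j.val * Omat d ^ k.val) := by
  ext r s
  rw [Matrix.conjTranspose_apply, Dmat_apply, Matrix.smul_apply, Dmat_apply]
  by_cases h : r = s + j
  · have h2 : s = r + -j := by rw [h]; ring
    rw [if_pos h2, if_pos h, ← zpow_natCast, omega_conj', smul_eq_mul, ← zpow_natCast,
      ← zpow_natCast, ← zpow_add₀ omega_ne_zero]
    apply omega_zpow_congr
    push_cast
    simp only [ZMod.natCast_val, ZMod.cast_id]
    rw [h2]
    ring
  · have h2 : ¬ s = r + -j := by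
      intro hs
      apply h
      rw [hs]; ring
    rw [if_neg h2, if_neg h, smul_zero, star_zero]

lemma sum_val_eq_range (f : ℕ → ℂ) :
    ∑ s : ZMod d, f s.val = ∑ i ∈ Finset.range d, f i := by
  refine Finset.sum_nbij' (i := fun s => s.val) (j := fun i => (i : ZMod d)) ?_ ?_ ?_ ?_ ?_
  · intro s _
    exact Finset.mem_range.mpr (ZMod.val_lt s)
  · intro i _
    exact Finset.mem_univ _
  · intro s _
    exact natCast_val' s
  · intro i hi
    exact ZMod.val_cast_of_lt (Finset.mem_range.mp hi)
  · intro s _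
    rfl

lemma sum_omega_zpow (m : ℤ) :
    ∑ s : ZMod d, omegaRoot d ^ ((s.val : ℤ) * m) = if (d : ℤ) ∣ m then (d : ℂ) else 0 := by
  by_cases hm : (d : ℤ) ∣ m
  · have h1 : ∀ s : ZMod d, omegaRoot d ^ ((s.val : ℤ) * m) = 1 := by
      intro s
      rw [omega_prim.zpow_eq_one_iff_dvd]
      exact Dvd.dvd.mul_left hm _
    rw [if_pos hm, Finset.sum_congr rfl (fun s _ => h1 s), Finset.sum_const]
    simp [ZMod.card]
  · have hz : omegaRoot d ^ m ≠ 1 := fun h => hm (omega_prim.zpow_eq_one_iff_dvd m |>.mp h)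
    have h1 : ∀ s : ZMod d, omegaRoot d ^ ((s.val : ℤ) * m) = (omegaRoot d ^ m) ^ s.val := by
      intro s
      rw [mul_comm, _root_.zpow_mul, zpow_natCast]
    rw [if_neg hm]
    simp only [h1]
    rw [sum_val_eq_range (fun i => (omegaRoot d ^ m) ^ i), geom_sum_eq hz]
    rw [← zpow_natCast (omegaRoot d ^ m), ← _root_.zpow_mul, mul_comm,
      _root_.zpow_mul, zpow_natCast, omega_prim.pow_eq_one, _root_.one_zpow]
    simp

lemma trace_D_mul_D_conjTranspose (a b j k : ZMod d) :
    ((Smat d ^ a.val * Omat d ^ b.val) * (Smat d ^ j.val * Omat d ^ k.val)ᴴ).trace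
      = if a = j ∧ b = k then (d : ℂ) else 0 := by
  have htr : ∀ (A B : Matrix (ZMod d) (ZMod d) ℂ),
      (A * B).trace = ∑ x : ZMod d, ∑ y : ZMod d, A x y * B y x := by
    intro A B
    simp [Matrix.trace, Matrix.mul_apply]
  rw [htr]
  simp only [Matrix.conjTranspose_apply, Dmat_apply]
  rw [Finset.sum_comm]
  have key : ∀ s : ZMod d,
      (∑ r : ZMod d, (if r = s + a then omegaRoot d ^ (s.val * b.val) else 0) *
        star (if r = s + j then omegaRoot d ^ (s.val * k.val) else 0))
      = if a = j then omegaRoot d ^ ((s.val : ℤ) * ((b.val : ℤ) - (k.val : ℤ))) else 0 := by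
    intro s
    rw [Finset.sum_eq_single (s + a)]
    · rw [if_pos rfl]
      by_cases haj : a = j
      · rw [if_pos haj, if_pos (by rw [haj]), ← zpow_natCast, ← zpow_natCast, omega_conj',
          ← zpow_add₀ omega_ne_zero]
        apply omega_zpow_congr
        push_cast
        ring
      · rw [if_neg haj, if_neg (fun hh : s + a = s + j => haj (by simpa using hh)),
          star_zero, mul_zero]
    · intro r _ hr
      rw [if_neg hr, zero_mul]
    · simp
  simp only [key]
  by_cases haj : a = j
  · simp only [if_pos haj, sum_omega_zpow]
    by_cases hbk : b = k
    · simp [haj, hbk]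
    · have hnd : ¬ ((d : ℤ) ∣ ((b.val : ℤ) - (k.val : ℤ))) := by
        intro hdvd
        apply hbk
        have hb := ZMod.val_lt b
        have hk := ZMod.val_lt k
        have hz : ((b.val : ℤ) - (k.val : ℤ)) = 0 :=
          Int.eq_zero_of_dvd_of_natAbs_lt_natAbs hdvd (by omega)
        have : b.val = k.val := by omega
        exact ZMod.val_injective d this
      rw [if_neg hnd, if_neg (by tauto : ¬ (a = j ∧ b = k))]
  · simp [haj]

lemma dC_ne_zero : (d : ℂ) ≠ 0 := Nat.cast_ne_zero.mpr (NeZero.ne d)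

lemma trace_D_mul_Trec (c : Matrix (ZMod d) (ZMod d) ℂ) (a b : ZMod d) :
    ((Smat d ^ a.val * Omat d ^ b.val) * Trec d c).trace = c a b := by
  rw [Trec, Matrix.mul_smul, Matrix.trace_smul]
  simp only [Matrix.mul_sum, Matrix.trace_sum, Matrix.mul_smul, Matrix.trace_smul,
    trace_D_mul_D_conjTranspose]
  have hsel : ∀ j k : ZMod d, c j k • (if a = j ∧ b = k then (d:ℂ) else 0)
      = if a = j then (if b = k then c j k * d else 0) else 0 := by
    intro j k
    by_cases h1 : a = j <;> by_cases h2 : b = k <;> simp [h1, h2, mul_comm]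
  simp only [hsel, Finset.sum_ite_eq, Finset.mem_univ, if_true]
  rw [smul_eq_mul]
  field_simp
  simp [Finset.sum_ite_irrel, dC_ne_zero]
  exact mul_div_cancel_left₀ _ dC_ne_zero

lemma trace_mul_eq (A B : Matrix (ZMod d) (ZMod d) ℂ) :
    (A * B).trace = ∑ x : ZMod d, ∑ y : ZMod d, A x y * B y x := by
  simp [Matrix.trace, Matrix.mul_apply]

lemma trace_D_mul_vecMulVec (v : ZMod d → ℂ) (j k : ZMod d) :
    ((Smat d ^ j.val * Omat d ^ k.val) * Matrix.vecMulVec v (star v)).trace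
      = overlap d v j k := by
  rw [trace_mul_eq, overlap]
  apply Finset.sum_congr rfl
  intro x _
  rw [Matrix.mulVec, dotProduct, Finset.sum_mul]
  apply Finset.sum_congr rfl
  intro y _
  rw [Matrix.vecMulVec_apply, Pi.star_apply, starRingEnd_apply]
  ring

lemma vecMulVec_conjTranspose (v : ZMod d → ℂ) :
    (Matrix.vecMulVec v (star v))ᴴ = Matrix.vecMulVec v (star v) := by
  ext r s
  simp only [Matrix.conjTranspose_apply, Matrix.vecMulVec_apply, Pi.star_apply, star_mul',
    star_star]
  ring

lemma vecMulVec_mul_self (v : ZMod d → ℂ) (hv : ∑ m : ZMod d, v m * star (v m) = 1) :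
    Matrix.vecMulVec v (star v) * Matrix.vecMulVec v (star v)
      = Matrix.vecMulVec v (star v) := by
  ext r s
  rw [Matrix.mul_apply]
  simp only [Matrix.vecMulVec_apply, Pi.star_apply]
  calc ∑ m : ZMod d, v r * star (v m) * (v m * star (v s))
      = (v r * star (v s)) * ∑ m : ZMod d, v m * star (v m) := by
        rw [Finset.mul_sum]; apply Finset.sum_congr rfl; intro m _; ring
    _ = v r * star (v s) := by rw [hv, mul_one]

lemma norm_one_of_abs (v : ZMod d → ℂ) (hv : (∑ r : ZMod d, ‖v r‖ ^ 2) = 1) :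
    ∑ m : ZMod d, v m * star (v m) = 1 := by
  have key : ∀ m : ZMod d, v m * star (v m) = ((‖v m‖ ^ 2 : ℝ) : ℂ) := by
    intro m
    rw [← starRingEnd_apply, Complex.mul_conj]
    norm_cast
    exact (Complex.sq_norm _).symm
  simp only [key]
  rw [← Complex.ofReal_sum, hv, Complex.ofReal_one]

lemma trace_vecMulVec (v : ZMod d → ℂ) :
    (Matrix.vecMulVec v (star v)).trace = ∑ m : ZMod d, v m * star (v m) := by
  simp [Matrix.trace, Matrix.vecMulVec_apply]

lemma Trec_conjTranspose (c : Matrix (ZMod d) (ZMod d) ℂ) :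
    (Trec d c)ᴴ = (1/(d:ℂ)) • ∑ j : ZMod d, ∑ k : ZMod d,
      (starRingEnd ℂ) (c j k) • (Smat d ^ j.val * Omat d ^ k.val) := by
  rw [Trec, Matrix.conjTranspose_smul]
  congr 1
  · simp
  · rw [Matrix.conjTranspose_sum]
    apply Finset.sum_congr rfl
    intro j _
    rw [Matrix.conjTranspose_sum]
    apply Finset.sum_congr rfl
    intro k _
    rw [Matrix.conjTranspose_smul, Matrix.conjTranspose_conjTranspose, starRingEnd_apply]

lemma Trec_hermitian (c : Matrix (ZMod d) (ZMod d) ℂ)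
    (hi : ∀ j k : ZMod d,
      c j k = omegaRoot d ^ (-((j.val : ℤ) * (k.val : ℤ))) * (starRingEnd ℂ) (c (-j) (-k))) :
    (Trec d c)ᴴ = Trec d c := by
  rw [Trec_conjTranspose, Trec]
  congr 1
  have step1 : ∀ j k : ZMod d,
      (starRingEnd ℂ) (c j k) • (Smat d ^ j.val * Omat d ^ k.val)
        = c (-j) (-k) • (Smat d ^ (-j).val * Omat d ^ (-k).val)ᴴ := by
    intro j k
    rw [Dmat_neg_conjTranspose]
    have hconj : (starRingEnd ℂ) (c j k)
        = omegaRoot d ^ (((j.val : ℤ) * (k.val : ℤ))) * c (-j) (-k) := by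
      rw [hi j k, _root_.map_mul, omega_conj, neg_neg, Complex.conj_conj]
    rw [hconj, smul_smul, ← zpow_natCast (omegaRoot d) (j.val * k.val)]
    push_cast
    ring_nf
  calc ∑ j : ZMod d, ∑ k : ZMod d,
        (starRingEnd ℂ) (c j k) • (Smat d ^ j.val * Omat d ^ k.val)
      = ∑ j : ZMod d, ∑ k : ZMod d,
          c (-j) (-k) • (Smat d ^ (-j).val * Omat d ^ (-k).val)ᴴ := by
        exact Finset.sum_congr rfl fun j _ => Finset.sum_congr rfl fun k _ => step1 j k
    _ = ∑ j : ZMod d, ∑ k : ZMod d, c j k • (Smat d ^ j.val * Omat d ^ k.val)ᴴ := by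
        apply Fintype.sum_equiv (Equiv.neg (ZMod d))
        intro j
        apply Fintype.sum_equiv (Equiv.neg (ZMod d))
        intro k
        simp only [Equiv.neg_apply]

lemma trace_Trec (c : Matrix (ZMod d) (ZMod d) ℂ) : (Trec d c).trace = c 0 0 := by
  have h := trace_D_mul_Trec (d := d) c 0 0
  simpa [ZMod.val_zero, pow_zero, Matrix.one_mul] using h

lemma trace_conjTranspose_mul_Trec (c : Matrix (ZMod d) (ZMod d) ℂ) :
    ((Trec d c)ᴴ * Trec d c).trace
      = (1/(d:ℂ)) * ∑ j : ZMod d, ∑ k : ZMod d, (starRingEnd ℂ) (c j k) * c j k := by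
  rw [Trec_conjTranspose, Matrix.smul_mul, Matrix.trace_smul, smul_eq_mul]
  congr 1
  rw [Matrix.sum_mul, Matrix.trace_sum]
  apply Finset.sum_congr rfl
  intro j _
  rw [Matrix.sum_mul, Matrix.trace_sum]
  apply Finset.sum_congr rfl
  intro k _
  rw [Matrix.smul_mul, Matrix.trace_smul, trace_D_mul_Trec, smul_eq_mul]

lemma trace_pow_eq_sum_eigenvalues (M : Matrix (ZMod d) (ZMod d) ℂ)
    (hM : M.IsHermitian) (n : ℕ) :
    (M ^ n).trace = ∑ i : ZMod d, ((hM.eigenvalues i : ℝ) : ℂ) ^ n := by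
  set U := (hM.eigenvectorUnitary : Matrix (ZMod d) (ZMod d) ℂ) with hUdef
  have hU1 : star U * U = 1 := (Unitary.mem_iff.mp hM.eigenvectorUnitary.2).1
  have hU2 : U * star U = 1 := (Unitary.mem_iff.mp hM.eigenvectorUnitary.2).2
  set D : Matrix (ZMod d) (ZMod d) ℂ :=
    Matrix.diagonal (RCLike.ofReal ∘ hM.eigenvalues) with hDdef
  have hspec : M = U * D * star U := hM.spectral_theorem
  have hpow : ∀ m : ℕ, M ^ m = U * D ^ m * star U := by
    intro m
    induction m with
    | zero => rw [pow_zero, pow_zero, Matrix.mul_one, hU2]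
    | succ m ih =>
      rw [pow_succ, ih, hspec, pow_succ]
      calc U * D ^ m * star U * (U * D * star U)
          = U * D ^ m * (star U * U) * D * star U := by
            simp only [Matrix.mul_assoc]
        _ = U * (D ^ m * D) * star U := by rw [hU1, Matrix.mul_one]; simp only [Matrix.mul_assoc]
  rw [hpow n, Matrix.trace_mul_cycle, hU1, Matrix.one_mul,
    hDdef, Matrix.diagonal_pow, Matrix.trace_diagonal]
  simp [Complex.coe_algebraMap]

lemma eigen_combinatorial (f : ZMod d → ℝ)
    (h1 : ∑ i : ZMod d, f i = 1) (h2 : ∑ i : ZMod d, (f i) ^ 2 = 1)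
    (h4 : ∑ i : ZMod d, (f i) ^ 4 = 1) :
    ∃ i0 : ZMod d, f i0 = 1 ∧ ∀ i : ZMod d, i ≠ i0 → f i = 0 := by
  have expand : ∑ i : ZMod d, ∑ j : ZMod d, (f i) ^ 2 * (f j) ^ 2 = 1 := by
    rw [← Finset.sum_mul_sum]
    rw [h2, one_mul]
  have split : ∀ i : ZMod d, ∑ j : ZMod d, (f i) ^ 2 * (f j) ^ 2
      = (f i) ^ 4 + ∑ j ∈ Finset.univ.erase i, (f i) ^ 2 * (f j) ^ 2 := by
    intro i
    rw [← Finset.add_sum_erase Finset.univ _ (Finset.mem_univ i)]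
    ring_nf
  have off : ∑ i : ZMod d, ∑ j ∈ Finset.univ.erase i, (f i) ^ 2 * (f j) ^ 2 = 0 := by
    have := expand
    simp only [split] at this
    rw [Finset.sum_add_distrib, h4] at this
    linarith
  have hkey : ∀ i j : ZMod d, j ≠ i → (f i) ^ 2 * (f j) ^ 2 = 0 := by
    intro i j hij
    have hnn : ∀ i ∈ Finset.univ, (0:ℝ) ≤ ∑ j ∈ Finset.univ.erase i, (f i) ^ 2 * (f j) ^ 2 := by
      intro i _
      apply Finset.sum_nonneg
      intro j _
      positivity
    have h0 := (Finset.sum_eq_zero_iff_of_nonneg hnn).mp off i (Finset.mem_univ i)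
    have hnn2 : ∀ j ∈ Finset.univ.erase i, (0:ℝ) ≤ (f i) ^ 2 * (f j) ^ 2 := by
      intro j _; positivity
    exact (Finset.sum_eq_zero_iff_of_nonneg hnn2).mp h0 j
      (Finset.mem_erase.mpr ⟨hij, Finset.mem_univ j⟩)
  obtain ⟨i0, hi0⟩ : ∃ i0 : ZMod d, f i0 ≠ 0 := by
    by_contra hall
    push_neg at hall
    rw [Finset.sum_eq_zero (fun i _ => hall i)] at h1
    norm_num at h1
  have hz : ∀ i : ZMod d, i ≠ i0 → f i = 0 := by
    intro i hi
    have := hkey i0 i hi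
    have h2' : (f i) ^ 2 = 0 := by
      rcases mul_eq_zero.mp this with h | h
      · exact absurd (pow_eq_zero_iff (by norm_num) |>.mp h) hi0
      · exact h
    exact pow_eq_zero_iff (by norm_num) |>.mp h2'
  refine ⟨i0, ?_, hz⟩
  rw [Finset.sum_eq_single i0 (fun i _ hi => hz i hi) (fun h => absurd (Finset.mem_univ i0) h)]
    at h1
  exact h1

lemma hermitian_rank_one (M : Matrix (ZMod d) (ZMod d) ℂ) (hM : M.IsHermitian)
    (h1 : M.trace = 1) (h2 : (M ^ 2).trace = 1) (h4 : (M ^ 4).trace = 1) :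
    ∃ v : ZMod d → ℂ, M = Matrix.vecMulVec v (star v) := by
  have cast_sum : ∀ n : ℕ, (M ^ n).trace = 1 →
      ∑ i : ZMod d, (hM.eigenvalues i) ^ n = 1 := by
    intro n hn
    have hcs : ((∑ i : ZMod d, (hM.eigenvalues i) ^ n : ℝ) : ℂ) = 1 := by
      push_cast
      rw [← trace_pow_eq_sum_eigenvalues M hM n]
      exact hn
    exact_mod_cast hcs
  obtain ⟨i0, hone, hzero⟩ := eigen_combinatorial hM.eigenvalues
    (by simpa using cast_sum 1 (by rwa [pow_one])) (cast_sum 2 h2) (cast_sum 4 h4)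
  refine ⟨fun r => (hM.eigenvectorUnitary : Matrix (ZMod d) (ZMod d) ℂ) r i0, ?_⟩
  have hg : (RCLike.ofReal ∘ hM.eigenvalues : ZMod d → ℂ)
      = fun i => if i = i0 then 1 else 0 := by
    funext i
    by_cases h : i = i0
    · simp [h, hone]
    · simp [h, hzero i h]
  have hspec := hM.spectral_theorem
  rw [hg] at hspec
  rw [Unitary.conjStarAlgAut_apply] at hspec
  refine hspec.trans ?_
  ext r s
  rw [Matrix.mul_apply]
  simp only [Matrix.mul_diagonal, Matrix.star_eq_conjTranspose, Matrix.conjTranspose_apply,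
    Matrix.vecMulVec_apply, Pi.star_apply]
  rw [Finset.sum_eq_single i0]
  · simp
  · intro b _ hb
    simp [hb]
  · simp

lemma sum_cc (hd : 2 ≤ d) (c : Matrix (ZMod d) (ZMod d) ℂ) (h0 : c 0 0 = 1)
    (hoff : ∀ j k : ZMod d, (j, k) ≠ (0, 0) → ‖c j k‖ ^ 2 = 1 / (d + 1)) :
    ∑ j : ZMod d, ∑ k : ZMod d, (starRingEnd ℂ) (c j k) * c j k = (d : ℂ) := by
  have key : ∀ j k : ZMod d, (starRingEnd ℂ) (c j k) * c j k
      = ((‖c j k‖ ^ 2 : ℝ) : ℂ) := by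
    intro j k
    rw [mul_comm, Complex.mul_conj]
    norm_cast
    exact (Complex.sq_norm _).symm
  simp only [key]
  norm_cast
  rw [← Finset.sum_product']
  rw [show (Finset.univ ×ˢ Finset.univ : Finset (ZMod d × ZMod d)) = Finset.univ from
    Finset.univ_product_univ]
  rw [← Finset.add_sum_erase Finset.univ _ (Finset.mem_univ ((0 : ZMod d), (0 : ZMod d)))]
  have h00 : ‖c 0 0‖ ^ 2 = 1 := by rw [h0]; simp
  have hconst : ∀ p ∈ Finset.univ.erase ((0 : ZMod d), (0 : ZMod d)),
      ‖c p.1 p.2‖ ^ 2 = 1 / ((d : ℝ) + 1) := by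
    intro p hp
    exact hoff p.1 p.2 (by simpa using (Finset.mem_erase.mp hp).1)
  rw [Finset.sum_congr rfl hconst, Finset.sum_const, Finset.card_erase_of_mem (Finset.mem_univ _)]
  have hcard : (Finset.univ : Finset (ZMod d × ZMod d)).card = d * d := by
    rw [Finset.card_univ, Fintype.card_prod, ZMod.card]
  rw [hcard, h00, nsmul_eq_mul]
  have hd1 : (1:ℕ) ≤ d * d := Nat.one_le_iff_ne_zero.mpr (Nat.mul_ne_zero (NeZero.ne d) (NeZero.ne d))
  push_cast [Nat.cast_sub hd1]
  have hdd : (d:ℝ) + 1 ≠ 0 := by positivity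
  field_simp
  ring

lemma mul_star_eq (z : ℂ) : z * star z = ((‖z‖ ^ 2 : ℝ) : ℂ) := by
  rw [← starRingEnd_apply, Complex.mul_conj]
  norm_cast
  exact (Complex.sq_norm _).symm

end Aux

theorem stmt1 (d : ℕ) [NeZero d] (hd : 2 ≤ d) (c : Matrix (ZMod d) (ZMod d) ℂ) :
    (∃ v : ZMod d → ℂ,
      (∑ r : ZMod d, ‖v r‖ ^ 2) = 1 ∧
      Trec d c = Matrix.vecMulVec v (star v) ∧
      (∀ j k : ZMod d, (j, k) ≠ (0, 0) →
        ‖overlap d v j k‖ ^ 2 = 1 / (d + 1))) ↔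
    ((∀ j k : ZMod d,
        c j k = omegaRoot d ^ (-((j.val : ℤ) * (k.val : ℤ))) * (starRingEnd ℂ) (c (-j) (-k))) ∧
      c 0 0 = 1 ∧
      (∀ j k : ZMod d, (j, k) ≠ (0, 0) → ‖c j k‖ ^ 2 = 1 / (d + 1)) ∧
      ((Trec d c) ^ 4).trace = 1) := by
  constructor
  · rintro ⟨v, hv1, hv2, hv3⟩
    set P := Matrix.vecMulVec v (star v) with hPdef
    have hnorm : ∑ m : ZMod d, v m * star (v m) = 1 := norm_one_of_abs v hv1
    have hc : ∀ a b : ZMod d, c a b = overlap d v a b := by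
      intro a b
      rw [← trace_D_mul_Trec (d := d) c a b, hv2, trace_D_mul_vecMulVec]
    have hcP : ∀ a b : ZMod d,
        c a b = ((Smat d ^ a.val * Omat d ^ b.val) * P).trace := by
      intro a b
      rw [hc a b, ← trace_D_mul_vecMulVec]
    have hP2 : P * P = P := vecMulVec_mul_self v hnorm
    refine ⟨?_, ?_, ?_, ?_⟩
    · intro j k
      have e2 : (starRingEnd ℂ) (c (-j) (-k))
          = omegaRoot d ^ (j.val * k.val) * c j k := by
        rw [hcP (-j) (-k), starRingEnd_apply, ← Matrix.trace_conjTranspose,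
          Matrix.conjTranspose_mul, vecMulVec_conjTranspose, Dmat_neg_conjTranspose,
          Matrix.mul_smul, Matrix.trace_smul, smul_eq_mul, Matrix.trace_mul_comm,
          ← hcP j k]
      rw [e2, ← mul_assoc, ← zpow_natCast (omegaRoot d) (j.val * k.val),
        ← zpow_add₀ omega_ne_zero]
      push_cast
      simp
    · rw [hcP 0 0]
      simp only [ZMod.val_zero, pow_zero, Matrix.one_mul]
      rw [_root_.trace_vecMulVec, hnorm]
    · intro j k hjk
      rw [hc j k]
      exact hv3 j k hjk
    · rw [hv2]
      have hPsq : P ^ 2 = P := by rw [sq]; exact hP2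
      have hP4 : P ^ 4 = P := by
        rw [show (4 : ℕ) = 2 * 2 from rfl, pow_mul, hPsq, hPsq]
      rw [hP4, _root_.trace_vecMulVec, hnorm]
  · rintro ⟨hi, h0, hoff, h4⟩
    have hherm : (Trec d c).IsHermitian := Trec_hermitian c hi
    have h1 : (Trec d c).trace = 1 := by rw [trace_Trec, h0]
    have h2 : ((Trec d c) ^ 2).trace = 1 := by
      rw [sq, show Trec d c * Trec d c = (Trec d c)ᴴ * Trec d c by rw [hherm.eq],
        trace_conjTranspose_mul_Trec, sum_cc hd c h0 hoff]
      field_simp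
      exact div_self dC_ne_zero
    obtain ⟨v, hv⟩ := hermitian_rank_one (Trec d c) hherm h1 h2 h4
    have htr : ∑ m : ZMod d, v m * star (v m) = 1 := by
      rw [← _root_.trace_vecMulVec, ← hv, h1]
    have habs : (∑ r : ZMod d, ‖v r‖ ^ 2) = 1 := by
      have hcast : ((∑ r : ZMod d, ‖v r‖ ^ 2 : ℝ) : ℂ) = 1 := by
        rw [Complex.ofReal_sum, ← htr]
        exact Finset.sum_congr rfl fun m _ => (mul_star_eq _).symm
      exact_mod_cast hcast
    refine ⟨v, habs, hv, ?_⟩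
    intro j k hjk
    have hov : overlap d v j k = c j k := by
      rw [← trace_D_mul_vecMulVec, ← hv, trace_D_mul_Trec]
    rw [hov]
    exact hoff j k hjk
end

section
/- If c ∈ ℂ^{ℤ_d×ℤ_d} and v ∈ ℂ^d satisfy Tc = vv*, and the entry v_0 ≠ 0, then v = (1/(d·conj(v_0)))·c̄·𝟙, where c̄ is the entrywise complex conjugate of the matrix c and 𝟙 ∈ ℂ^d is the all-ones vector; equivalently, d·conj(v_0)·v_j = Σ_{k∈ℤ_d} conj(c_{jk}) for each j ∈ ℤ_d. -/
open Matrix Complex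

lemma Smat_pow (d : ℕ) [NeZero d] (m : ℕ) (x y : ZMod d) :
    (Smat d ^ m) x y = if x = y + (m : ZMod d) then 1 else 0 := by
  induction m generalizing x y with
  | zero => simp [Matrix.one_apply]
  | succ m ih =>
    rw [pow_succ, Matrix.mul_apply]
    simp only [ih]
    simp only [Smat, Matrix.of_apply, mul_ite, mul_one, mul_zero]
    rw [Finset.sum_ite_eq' Finset.univ (y + 1)]
    simp only [Finset.mem_univ, if_true]
    push_cast
    ring_nf

lemma Omat_pow (d : ℕ) [NeZero d] (m : ℕ) (x y : ZMod d) :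
    (Omat d ^ m) x y = if x = y then omegaRoot d ^ (x.val * m) else 0 := by
  induction m generalizing x y with
  | zero => simp [Matrix.one_apply]
  | succ m ih =>
    rw [pow_succ, Matrix.mul_apply]
    simp only [ih]
    simp only [Omat, Matrix.of_apply, ite_mul, zero_mul, mul_ite, mul_zero]
    rw [Finset.sum_ite_eq' Finset.univ y]
    simp only [Finset.mem_univ, if_true]
    by_cases h : x = y
    · subst h; simp [pow_succ, pow_mul]
    · simp [h]

lemma SOmat_apply (d : ℕ) [NeZero d] (j k : ZMod d) (b : ZMod d) :
    (Smat d ^ j.val * Omat d ^ k.val) b 0 = if b = j then 1 else 0 := by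
  rw [Matrix.mul_apply]
  simp only [Smat_pow, Omat_pow, ite_mul, zero_mul, mul_ite, mul_zero]
  rw [Finset.sum_ite_eq' Finset.univ (0 : ZMod d)]
  simp [ZMod.natCast_val, ZMod.cast_id]

lemma Trec_zero (d : ℕ) [NeZero d] (c : Matrix (ZMod d) (ZMod d) ℂ) (b : ZMod d) :
    Trec d c 0 b = (1 / (d : ℂ)) * ∑ k : ZMod d, c b k := by
  unfold Trec
  simp only [Matrix.smul_apply, Matrix.sum_apply, smul_eq_mul, Matrix.conjTranspose_apply,
    SOmat_apply]
  congr 1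
  have : ∀ j k : ZMod d, c j k * star (if b = j then (1:ℂ) else 0)
      = if j = b then c j k else 0 := by
    intro j k
    by_cases h : j = b
    · subst h; simp
    · simp [Ne.symm h, h]
  simp only [this]
  rw [Finset.sum_comm]
  simp [Finset.sum_ite_eq']

theorem stmt3 (d : ℕ) [NeZero d] (hd : 2 ≤ d) (c : Matrix (ZMod d) (ZMod d) ℂ)
    (v : ZMod d → ℂ) (hTc : Trec d c = Matrix.vecMulVec v (star v)) (hv0 : v 0 ≠ 0) :
    v = (1 / ((d : ℂ) * (starRingEnd ℂ) (v 0))) • ((c.map (starRingEnd ℂ)) *ᵥ fun _ => 1) ∧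
    ∀ j : ZMod d, (d : ℂ) * (starRingEnd ℂ) (v 0) * v j = ∑ k : ZMod d, (starRingEnd ℂ) (c j k) := by
  have hdC : (d : ℂ) ≠ 0 := Nat.cast_ne_zero.mpr (NeZero.ne d)
  have h1 : ∀ b : ZMod d, v 0 * (starRingEnd ℂ) (v b) = (1 / (d : ℂ)) * ∑ k : ZMod d, c b k := by
    intro b
    rw [← Trec_zero, hTc, Matrix.vecMulVec_apply]
    rfl
  have h2 : ∀ j : ZMod d, (d : ℂ) * (starRingEnd ℂ) (v 0) * v j
      = ∑ k : ZMod d, (starRingEnd ℂ) (c j k) := by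
    intro j
    have := congrArg (starRingEnd ℂ) (h1 j)
    simp only [_root_.map_mul, map_sum, Complex.conj_conj, map_div₀, _root_.map_one, Complex.conj_natCast] at this
    field_simp at this
    linear_combination this
  refine ⟨?_, h2⟩
  funext j
  have hne : (d : ℂ) * (starRingEnd ℂ) (v 0) ≠ 0 :=
    mul_ne_zero hdC (by simpa using hv0)
  simp only [Pi.smul_apply, Matrix.mulVec, dotProduct, Matrix.map_apply, mul_one,
    smul_eq_mul]
  rw [← h2 j]
  field_simp
  exact (mul_div_cancel_right₀ _ (by simpa using hv0)).symm
end
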